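/- Let X be a nonempty set and σ an action of the multiplicative monoid of positive integers on X (σ 1 y = y and σ (m·n) y = σ m (σ n y)) such that: (i) for all y, z ∈ X there exist positive integers m, n and w ∈ X with σ m w = y and σ n w = z; and (ii) for all positive integers m, n and y ∈ X, if σ m y = σ n y then there exist a positive integer p and z ∈ X with m·p = n·p and σ p z = y. Then there exists an injective function f : X → ℚ such that f x > 0 for all x ∈ X, f (σ n x) = n · f x for all positive integers n and all x, and the range of f is closed under addition (f x + f y lies in the range of f for all x, y). Hence X is isomorphic, as an ℕ×-set, to the positive part of a subgroup of ℚ. -/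
import Mathlib


/-- A flat action `σ` of the multiplicative monoid of positive integers on a
nonempty set `X` is isomorphic, as an `ℕ×`-set, to the positive part of a
subgroup of `ℚ` (with the action `n · q = n * q`). -/
theorem stmt_17 {X : Type*} [Nonempty X] (σ : ℕ+ → X → X)
    (hone : ∀ y : X, σ 1 y = y)
    (hmul : ∀ (m n : ℕ+) (y : X), σ (m * n) y = σ m (σ n y))
    (hdiv : ∀ y z : X, ∃ (m n : ℕ+) (w : X), σ m w = y ∧ σ n w = z)
    (hflat : ∀ (m n : ℕ+) (y : X), σ m y = σ n y →
      ∃ (p : ℕ+) (z : X), m * p = n * p ∧ σ p z = y) :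
    ∃ f : X → ℚ, Function.Injective f ∧ (∀ x : X, 0 < f x) ∧
      (∀ (n : ℕ+) (x : X), f (σ n x) = (n : ℚ) * f x) ∧
      (∀ x y : X, ∃ z : X, f x + f y = f z) := by
  obtain ⟨x₀⟩ := ‹Nonempty X›
  -- cancellation: the action separates exponents
  have hcancel : ∀ (m n : ℕ+) (y : X), σ m y = σ n y → m = n := by
    intro m n y h
    obtain ⟨p, z, hp, _⟩ := hflat m n y h
    exact mul_right_cancel hp
  -- choose representations over x₀
  choose M N W hM hN using fun x => hdiv x x₀
  set f : X → ℚ := fun x => (M x : ℚ) / (N x) with hf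
  -- well-definedness: any representation gives the same ratio
  have hcons : ∀ (x : X) (a b : ℕ+) (u : X), σ a u = x → σ b u = x₀ →
      f x = (a : ℚ) / b := by
    intro x a b u ha hb
    obtain ⟨c, d, v, hc, hd⟩ := hdiv (W x) u
    have h1 : σ (M x * c) v = σ (a * d) v := by
      rw [hmul, hmul, hc, hd, hM, ha]
    have h2 : σ (N x * c) v = σ (b * d) v := by
      rw [hmul, hmul, hc, hd, hN, hb]
    have e1 : M x * c = a * d := hcancel _ _ _ h1
    have e2 : N x * c = b * d := hcancel _ _ _ h2
    have key : M x * b = a * N x := by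
      have : M x * c * b = a * (N x * c) := by rw [e1, e2]; ring
      have : M x * b * c = a * N x * c := by
        calc M x * b * c = M x * c * b := by ring
        _ = a * (N x * c) := this
        _ = a * N x * c := by ring
      exact mul_right_cancel this
    have hb0 : (0 : ℚ) < (b : ℚ) := by exact_mod_cast b.pos
    have hN0 : (0 : ℚ) < (N x : ℚ) := by exact_mod_cast (N x).pos
    rw [hf]
    rw [div_eq_div_iff hN0.ne' hb0.ne']
    exact_mod_cast key
  -- common root lemma
  have hcommon : ∀ x y : X, ∃ (a b c : ℕ+) (u : X),
      σ a u = x ∧ σ b u = y ∧ σ c u = x₀ := by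
    intro x y
    obtain ⟨a₁, b₁, v, ha₁, hb₁⟩ := hdiv x y
    obtain ⟨c₁, d, u, hc₁, hd⟩ := hdiv v x₀
    exact ⟨a₁ * c₁, b₁ * c₁, d, u,
      by rw [hmul, hc₁, ha₁], by rw [hmul, hc₁, hb₁], hd⟩
  refine ⟨f, ?_, ?_, ?_, ?_⟩
  · -- injectivity
    intro x y hxy
    obtain ⟨a, b, c, u, ha, hb, hc⟩ := hcommon x y
    have fx := hcons x a c u ha hc
    have fy := hcons y b c u hb hc
    have hc0 : (0 : ℚ) < (c : ℚ) := by exact_mod_cast c.pos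
    have hab : a = b := by
      have h := fx.symm.trans (hxy.trans fy)
      field_simp [hc0.ne'] at h
      exact_mod_cast h
    rw [← ha, ← hb, hab]
  · -- positivity
    intro x
    have h1 : (0 : ℚ) < (M x : ℚ) := by exact_mod_cast (M x).pos
    have h2 : (0 : ℚ) < (N x : ℚ) := by exact_mod_cast (N x).pos
    exact div_pos h1 h2
  · -- equivariance
    intro k x
    have ha : σ (k * M x) (W x) = σ k x := by rw [hmul, hM]
    have := hcons (σ k x) (k * M x) (N x) (W x) ha (hN x)
    rw [this, hf]
    push_cast
    ring
  · -- closed under addition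
    intro x y
    obtain ⟨a, b, c, u, ha, hb, hc⟩ := hcommon x y
    refine ⟨σ (a + b) u, ?_⟩
    have fz := hcons (σ (a + b) u) (a + b) c u rfl hc
    have fx := hcons x a c u ha hc
    have fy := hcons y b c u hb hc
    rw [fz, fx, fy]
    have hc0 : (0 : ℚ) < (c : ℚ) := by exact_mod_cast c.pos
    push_cast
    field_simp
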